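/- Let V be a real vector space, B : V × V → ℝ a bilinear form, f : V → V an invertible linear map, α > 1 a real number, and E, E' ∈ V with f E = α E and f E' = α^(−1) E'. Let D ∈ V and suppose there is c > 0 such that B(f^n (E + E'), D) > c for all integers n ≥ 0. Then B(E, D) ≥ 0 and moreover if the inequality B(f^n(E+E'), D) > c holds for all integers n ∈ ℤ, then B(E, D) > 0 and B(E', D) > 0. -/

import Mathlib

-- eigenvector under zpow
lemma zpow_eig (V : Type*) [AddCommGroup V] [Module ℝ V]
    (f : V ≃ₗ[ℝ] V) (α : ℝ) (hα0 : α ≠ 0) (E : V) (hE : f E = α • E) :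
    ∀ n : ℤ, (f ^ n) E = (α ^ n) • E := by
  have hinv : f.symm E = α⁻¹ • E := by
    apply f.injective
    rw [f.apply_symm_apply, map_smul, hE, smul_smul, inv_mul_cancel₀ hα0, one_smul]
  intro n
  induction n using Int.induction_on with
  | zero => simp
  | succ k ih =>
      have : f ^ ((k : ℤ) + 1) = f * f ^ (k : ℤ) := by
        rw [add_comm, zpow_add, zpow_one]
      rw [this]
      show f ((f ^ (k : ℤ)) E) = _
      rw [ih, map_smul, hE, smul_smul, zpow_add_one₀ hα0, mul_comm]
  | pred k ih =>
      have : f ^ (-(k : ℤ) - 1) = f⁻¹ * f ^ (-(k : ℤ)) := by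
        rw [sub_eq_add_neg, add_comm, zpow_add, zpow_neg_one]
      rw [this]
      show f.symm ((f ^ (-(k : ℤ))) E) = _
      rw [ih, map_smul, hinv, smul_smul, zpow_sub_one₀ hα0, mul_comm]

lemma key_nonneg (α a b c : ℝ) (hα : 1 < α) (hc : 0 < c)
    (h : ∀ n : ℤ, 0 ≤ n → c < α ^ n * a + α ^ (-n) * b) : 0 ≤ a := by
  by_contra ha
  push_neg at ha
  obtain ⟨k, hk⟩ := pow_unbounded_of_one_lt ((|b| - c) / (-a)) hα
  have h1 := h k (Int.natCast_nonneg k)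
  have hαpos : (0:ℝ) < α := lt_trans one_pos hα
  have hzk : α ^ (k:ℤ) = α ^ k := zpow_natCast α k
  have hb : α ^ (-(k:ℤ)) * b ≤ |b| := by
    have h1 : α ^ (-(k:ℤ)) ≤ 1 := by
      apply zpow_le_one_of_nonpos₀ (le_of_lt hα) (by simp)
    have h2 : (0:ℝ) < α ^ (-(k:ℤ)) := zpow_pos hαpos _
    calc α ^ (-(k:ℤ)) * b ≤ α ^ (-(k:ℤ)) * |b| := by
          exact mul_le_mul_of_nonneg_left (le_abs_self b) (le_of_lt h2)
      _ ≤ 1 * |b| := by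
          exact mul_le_mul_of_nonneg_right h1 (abs_nonneg b)
      _ = |b| := one_mul _
  have hk' : (|b| - c) < α ^ k * (-a) := by
    rw [div_lt_iff₀ (by linarith)] at hk
    linarith
  rw [hzk] at h1
  nlinarith

lemma key_pos (α a b c : ℝ) (hα : 1 < α) (hc : 0 < c)
    (h : ∀ n : ℤ, c < α ^ n * a + α ^ (-n) * b) : 0 < a ∧ 0 < b := by
  have hαpos : (0:ℝ) < α := lt_trans one_pos hα
  have ha : 0 ≤ a := key_nonneg α a b c hα hc (fun n _ => h n)
  have hb : 0 ≤ b := by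
    apply key_nonneg α b a c hα hc
    intro n _
    have := h (-n)
    rw [neg_neg] at this
    linarith
  constructor
  · rcases ha.lt_or_eq with h' | h'
    · exact h'
    · exfalso
      obtain ⟨k, hk⟩ := pow_unbounded_of_one_lt (b / c) hα
      have h1 := h k
      rw [← h', mul_zero, zero_add] at h1
      have hzk : α ^ (k:ℤ) = α ^ k := zpow_natCast α k
      have hmul : α ^ ((k:ℤ)) * α ^ (-(k:ℤ)) = 1 := by
        rw [← zpow_add₀ (ne_of_gt hαpos)]; simp
      have hpos : (0:ℝ) < α ^ (-(k:ℤ)) := zpow_pos hαpos _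
      rw [div_lt_iff₀ hc, ← hzk] at hk
      nlinarith
  · rcases hb.lt_or_eq with h' | h'
    · exact h'
    · exfalso
      obtain ⟨k, hk⟩ := pow_unbounded_of_one_lt (a / c) hα
      have h1 := h (-(k:ℤ))
      rw [neg_neg, ← h', mul_zero, add_zero] at h1
      have hzk : α ^ (k:ℤ) = α ^ k := zpow_natCast α k
      have hmul : α ^ ((k:ℤ)) * α ^ (-(k:ℤ)) = 1 := by
        rw [← zpow_add₀ (ne_of_gt hαpos)]; simp
      have hpos : (0:ℝ) < α ^ (-(k:ℤ)) := zpow_pos hαpos _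
      rw [div_lt_iff₀ hc, ← hzk] at hk
      nlinarith

theorem stmt_4 (V : Type*) [AddCommGroup V] [Module ℝ V]
    (B : LinearMap.BilinForm ℝ V) (f : V ≃ₗ[ℝ] V) (α : ℝ) (hα : 1 < α)
    (E E' D : V) (hE : f E = α • E) (hE' : f E' = α⁻¹ • E')
    (c : ℝ) (hc : 0 < c)
    (h : ∀ n : ℤ, 0 ≤ n → c < B ((f ^ n) (E + E')) D) :
    0 ≤ B E D ∧
      ((∀ n : ℤ, c < B ((f ^ n) (E + E')) D) → 0 < B E D ∧ 0 < B E' D) := by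
  have hα0 : α ≠ 0 := by positivity
  have hαpos : (0:ℝ) < α := lt_trans one_pos hα
  have hval : ∀ n : ℤ, B ((f ^ n) (E + E')) D
      = α ^ n * B E D + α ^ (-n) * B E' D := by
    intro n
    have h1 := zpow_eig V f α hα0 E hE n
    have h2 : (f ^ n) E' = (α ^ (-n)) • E' := by
      have := zpow_eig V f α⁻¹ (inv_ne_zero hα0) E' hE' n
      rwa [inv_zpow, ← zpow_neg] at this
    rw [map_add, h1, h2, map_add, map_smul, map_smul]
    simp
  constructor
  · apply key_nonneg α (B E D) (B E' D) c hα hc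
    intro n hn
    rw [← hval n]
    exact h n hn
  · intro h'
    apply key_pos α (B E D) (B E' D) c hα hc
    intro n
    rw [← hval n]
    exact h' n
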